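/- For fixed r ∈ ℝ, t ∈ [0,1), the function v_r(t,·) is C¹ at the boundary point z = r + β√(1-t): the left derivative of z ↦ r + √(2π(1-t))(1-β²)exp((z-r)²/(2(1-t)))Φ((z-r)/√(1-t)) at z = r + β√(1-t) equals 1 (smooth fit). -/

import Mathlib

open Real Set MeasureTheory

/-- The standard normal cumulative distribution function. -/
noncomputable def Phi (x : ℝ) : ℝ :=
  (Real.sqrt (2 * Real.pi))⁻¹ * ∫ u in Set.Iic x, Real.exp (-u ^ 2 / 2)


lemma cont_gauss : Continuous (fun u : ℝ => Real.exp (-u ^ 2 / 2)) := by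
  continuity

lemma integrable_gauss : Integrable (fun u : ℝ => Real.exp (-u ^ 2 / 2)) := by
  have h := integrable_exp_neg_mul_sq (by norm_num : (0:ℝ) < 1/2)
  convert h using 2 with u
  ring_nf


lemma hasDerivAt_Phi (x : ℝ) :
    HasDerivAt Phi ((Real.sqrt (2 * Real.pi))⁻¹ * Real.exp (-x ^ 2 / 2)) x := by
  have key : ∀ y : ℝ, Phi y = (Real.sqrt (2 * Real.pi))⁻¹ *
      ((∫ u in Set.Iic (0:ℝ), Real.exp (-u ^ 2 / 2)) +
        ∫ u in (0:ℝ)..y, Real.exp (-u ^ 2 / 2)) := by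
    intro y
    unfold Phi
    rw [← intervalIntegral.integral_Iic_sub_Iic integrable_gauss.integrableOn
      integrable_gauss.integrableOn]
    ring
  have hft : HasDerivAt (fun y : ℝ => ∫ u in (0:ℝ)..y, Real.exp (-u ^ 2 / 2))
      (Real.exp (-x ^ 2 / 2)) x :=
    intervalIntegral.integral_hasDerivAt_right
      integrable_gauss.intervalIntegrable
      (cont_gauss.stronglyMeasurable.stronglyMeasurableAtFilter)
      cont_gauss.continuousAt
  have h2 := ((hft.const_add (∫ u in Set.Iic (0:ℝ), Real.exp (-u ^ 2 / 2))).const_mul ((Real.sqrt (2 * Real.pi))⁻¹))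
  have h3 : HasDerivAt Phi ((Real.sqrt (2 * Real.pi))⁻¹ * Real.exp (-x ^ 2 / 2)) x := by
    refine h2.congr_of_eventuallyEq ?_
    filter_upwards with y using (key y)
  exact h3


theorem stmt17 (β r t : ℝ) (hβ : 0 < β)
    (hroot : Real.sqrt (2 * Real.pi) * (1 - β ^ 2) * Real.exp (β ^ 2 / 2) * Phi β = β)
    (ht : t ∈ Set.Ico (0 : ℝ) 1) :
    HasDerivWithinAt
      (fun z => r + Real.sqrt (2 * Real.pi * (1 - t)) * (1 - β ^ 2) *
        Real.exp ((z - r) ^ 2 / (2 * (1 - t))) * Phi ((z - r) / Real.sqrt (1 - t)))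
      1 (Set.Iic (r + β * Real.sqrt (1 - t))) (r + β * Real.sqrt (1 - t)) := by
  have ht1 : (0:ℝ) < 1 - t := by linarith [ht.2]
  set s := Real.sqrt (1 - t) with hs_def
  have hs : 0 < s := Real.sqrt_pos.mpr ht1
  have hs2 : s ^ 2 = 1 - t := Real.sq_sqrt ht1.le
  set z₀ := r + β * s with hz0
  have hz0r : z₀ - r = β * s := by ring
  set A := Real.sqrt (2 * Real.pi * (1 - t)) * (1 - β ^ 2) with hA
  have hE : HasDerivAt (fun z : ℝ => (z - r) ^ 2 / (2 * (1 - t)))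
      ((2 * (z₀ - r) ^ 1 * 1) / (2 * (1 - t))) z₀ :=
    (((hasDerivAt_id z₀).sub_const r).pow 2).div_const _
  have hexp := hE.exp
  have hH : HasDerivAt (fun z : ℝ => (z - r) / s) (1 / s) z₀ := by
    simpa using ((hasDerivAt_id z₀).sub_const r).div_const s
  have hHz0 : (z₀ - r) / s = β := by
    rw [hz0r]; field_simp
  have hΦ : HasDerivAt (fun z : ℝ => Phi ((z - r) / s))
      (((Real.sqrt (2 * Real.pi))⁻¹ * Real.exp (-β ^ 2 / 2)) * (1 / s)) z₀ := by
    have := (hasDerivAt_Phi ((z₀ - r) / s)).comp z₀ hH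
    rw [hHz0] at this
    exact this
  have hmul := ((hexp.const_mul A).mul hΦ).const_add r
  have hval : A * (Real.exp ((z₀ - r) ^ 2 / (2 * (1 - t))) * (2 * (z₀ - r) ^ 1 * 1 / (2 * (1 - t)))) *
        Phi ((z₀ - r) / s) +
      A * Real.exp ((z₀ - r) ^ 2 / (2 * (1 - t))) *
        ((Real.sqrt (2 * Real.pi))⁻¹ * Real.exp (-β ^ 2 / 2) * (1 / s)) = 1 := by
    have hE0 : (z₀ - r) ^ 2 / (2 * (1 - t)) = β ^ 2 / 2 := by
      rw [hz0r, ← hs2]; field_simp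
    have hAs : A = Real.sqrt (2 * Real.pi) * s * (1 - β ^ 2) := by
      rw [hA, hs_def, Real.sqrt_mul (by positivity)]
    have hd : 2 * (z₀ - r) ^ 1 * 1 / (2 * (1 - t)) = β / s := by
      rw [hz0r, ← hs2]; field_simp
    rw [hE0, hHz0, hd, hAs]
    set P := Real.sqrt (2 * Real.pi) with hPdef
    have hP : P ≠ 0 := by
      rw [hPdef]; positivity
    have hee : Real.exp (β ^ 2 / 2) * Real.exp (-β ^ 2 / 2) = 1 := by
      have hz : β ^ 2 / 2 + -β ^ 2 / 2 = 0 := by ring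
      rw [← Real.exp_add, hz, Real.exp_zero]
    have h1 : P * s * (1 - β ^ 2) * (Real.exp (β ^ 2 / 2) * (β / s)) * Phi β = β ^ 2 := by
      have e1 : P * s * (1 - β ^ 2) * (Real.exp (β ^ 2 / 2) * (β / s)) * Phi β
          = (P * (1 - β ^ 2) * Real.exp (β ^ 2 / 2) * Phi β) * β * (s / s) := by ring
      rw [e1, div_self hs.ne', hroot]; ring
    have h2 : P * s * (1 - β ^ 2) * Real.exp (β ^ 2 / 2) *
        (P⁻¹ * Real.exp (-β ^ 2 / 2) * (1 / s)) = 1 - β ^ 2 := by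
      have e2 : P * s * (1 - β ^ 2) * Real.exp (β ^ 2 / 2) *
          (P⁻¹ * Real.exp (-β ^ 2 / 2) * (1 / s))
          = (1 - β ^ 2) * (P * P⁻¹) * (s * (1 / s)) *
            (Real.exp (β ^ 2 / 2) * Real.exp (-β ^ 2 / 2)) := by ring
      rw [e2, mul_inv_cancel₀ hP, hee]
      field_simp
    linarith
  rw [hval] at hmul
  exact hmul.hasDerivWithinAt
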